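/- Let r₁, r₂ > 0. As ε → 0⁺, α(ε)/(ξ₁(ε) + ξ₂(ε)) = r₁r₂/(r₁+r₂) + O(ε). -/

import Mathlib

open Real Filter Topology

/-- Half-distance between the fixed points of the composed reflections. -/
noncomputable def alphaBi (r₁ r₂ ε : ℝ) : ℝ :=
  Real.sqrt (ε * (2 * r₁ + ε) * (2 * r₂ + ε) * (2 * r₁ + 2 * r₂ + ε)) /
    (2 * (r₁ + r₂ + ε))

/-- Bispherical coordinate of the boundary of the first sphere. -/
noncomputable def xi1 (r₁ r₂ ε : ℝ) : ℝ := Real.arsinh (alphaBi r₁ r₂ ε / r₁)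

/-- Bispherical coordinate of the boundary of the second sphere. -/
noncomputable def xi2 (r₁ r₂ ε : ℝ) : ℝ := Real.arsinh (alphaBi r₁ r₂ ε / r₂)

lemma my_arsinh_le_self {x : ℝ} (hx : 0 ≤ x) : Real.arsinh x ≤ x := by
  have h : x ≤ Real.sinh x := by
    rcases eq_or_lt_of_le hx with h | h
    · simp [← h]
    · exact (Real.self_lt_sinh_iff.2 h).le
  calc Real.arsinh x ≤ Real.arsinh (Real.sinh x) := Real.arsinh_le_arsinh.2 h
    _ = x := Real.arsinh_sinh x

lemma my_arsinh_lower {x : ℝ} (hx : 0 ≤ x) : x - x ^ 3 / 6 ≤ Real.arsinh x := by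
  have hd : ∀ y : ℝ, HasDerivAt (fun y : ℝ => Real.arsinh y - (y - y ^ 3 / 6))
      ((Real.sqrt (1 + y ^ 2))⁻¹ - (1 - 3 * y ^ 2 / 6)) y := by
    intro y
    have h1 := Real.hasDerivAt_arsinh y
    have h2 : HasDerivAt (fun y : ℝ => y - y ^ 3 / 6) (1 - 3 * y ^ 2 / 6) y := by
      have := (hasDerivAt_id y).sub ((hasDerivAt_pow 3 y).div_const 6)
      exact this.congr_deriv (by norm_num)
    exact h1.sub h2
  have mono : MonotoneOn (fun y : ℝ => Real.arsinh y - (y - y ^ 3 / 6)) (Set.Ici 0) := by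
    apply monotoneOn_of_deriv_nonneg (convex_Ici 0)
    · exact (Real.continuous_arsinh.sub (by continuity)).continuousOn
    · intro y _
      exact (hd y).differentiableAt.differentiableWithinAt
    · intro y _
      rw [(hd y).deriv]
      have hs : 0 < Real.sqrt (1 + y ^ 2) := Real.sqrt_pos.2 (by positivity)
      have hs2 : (Real.sqrt (1 + y ^ 2)) ^ 2 = 1 + y ^ 2 := Real.sq_sqrt (by positivity)
      have h1 : (1 : ℝ) ≤ Real.sqrt (1 + y ^ 2) := by
        nlinarith [hs, hs2, sq_nonneg y]
      rw [sub_nonneg]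
      rcases le_or_gt (1 - 3 * y ^ 2 / 6) 0 with h | h
      · exact h.trans (by positivity)
      · rw [inv_eq_one_div, le_div_iff₀ hs]
        nlinarith [sq_nonneg y, sq_nonneg (y ^ 2), mul_pos h hs]
  have h0 : (0 : ℝ) ∈ Set.Ici (0 : ℝ) := Set.self_mem_Ici
  have := mono h0 hx hx
  simp only [Real.arsinh_zero] at this
  norm_num at this
  linarith

theorem alphaBi_div_xi_sum_asymptotics (r₁ r₂ : ℝ) (hr₁ : 0 < r₁) (hr₂ : 0 < r₂) :
    (fun ε => alphaBi r₁ r₂ ε / (xi1 r₁ r₂ ε + xi2 r₁ r₂ ε) -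
        r₁ * r₂ / (r₁ + r₂))
      =O[𝓝[>] (0 : ℝ)] (fun ε => ε) := by
  have hr12 : 0 < r₁ + r₂ := by linarith
  set A : ℝ := r₁⁻¹ + r₂⁻¹ with hA
  have hA0 : 0 < A := by positivity
  set K : ℝ := (r₁⁻¹ ^ 3 + r₂⁻¹ ^ 3) / 6 with hK
  have hK0 : 0 < K := by positivity
  set M : ℝ := (2 * r₁ + 1) * (2 * r₂ + 1) * (2 * r₁ + 2 * r₂ + 1) / (4 * (r₁ + r₂) ^ 2)
    with hM
  have hM0 : 0 < M := by positivity
  set δ : ℝ := min 1 (A / (2 * K * (M + 1))) with hδ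
  have hδ0 : 0 < δ := lt_min one_pos (by positivity)
  rw [Asymptotics.isBigO_iff]
  refine ⟨2 * K / A ^ 2 * M, ?_⟩
  filter_upwards [Ioc_mem_nhdsGT hδ0] with ε hε
  obtain ⟨hε0, hεδ⟩ := hε
  simp only [xi1, xi2, Real.norm_eq_abs]
  set α := alphaBi r₁ r₂ ε with hα
  have hp : 0 < ε * (2 * r₁ + ε) * (2 * r₂ + ε) * (2 * r₁ + 2 * r₂ + ε) :=
    mul_pos (mul_pos (mul_pos hε0 (by linarith)) (by linarith)) (by linarith)
  have hα0 : 0 < α := div_pos (Real.sqrt_pos.2 hp) (by linarith)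
  have hα2 : α ^ 2 = ε * (2 * r₁ + ε) * (2 * r₂ + ε) * (2 * r₁ + 2 * r₂ + ε) /
      (2 * (r₁ + r₂ + ε)) ^ 2 := by
    rw [hα, alphaBi, div_pow, Real.sq_sqrt hp.le]
  have hε1 : ε ≤ 1 := hεδ.trans (min_le_left _ _)
  have hεδ2 : ε ≤ A / (2 * K * (M + 1)) := hεδ.trans (min_le_right _ _)
  have hα2le : α ^ 2 ≤ M * ε := by
    have hnum : ε * (2 * r₁ + ε) * (2 * r₂ + ε) * (2 * r₁ + 2 * r₂ + ε) ≤
        ε * (2 * r₁ + 1) * (2 * r₂ + 1) * (2 * r₁ + 2 * r₂ + 1) := by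
      gcongr <;> linarith
    have hden : (2 * (r₁ + r₂)) ^ 2 ≤ (2 * (r₁ + r₂ + ε)) ^ 2 := by nlinarith
    calc α ^ 2 ≤ ε * (2 * r₁ + 1) * (2 * r₂ + 1) * (2 * r₁ + 2 * r₂ + 1) /
          (2 * (r₁ + r₂)) ^ 2 := by
          rw [hα2]
          exact div_le_div₀ (by positivity) hnum (by positivity) hden
      _ = M * ε := by rw [hM]; field_simp; ring
  -- arsinh bounds
  have h1u : Real.arsinh (α / r₁) ≤ α / r₁ := my_arsinh_le_self (by positivity)
  have h2u : Real.arsinh (α / r₂) ≤ α / r₂ := my_arsinh_le_self (by positivity)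
  have h1l : α / r₁ - (α / r₁) ^ 3 / 6 ≤ Real.arsinh (α / r₁) :=
    my_arsinh_lower (by positivity)
  have h2l : α / r₂ - (α / r₂) ^ 3 / 6 ≤ Real.arsinh (α / r₂) :=
    my_arsinh_lower (by positivity)
  set S : ℝ := Real.arsinh (α / r₁) + Real.arsinh (α / r₂) with hS
  have hid1 : α * A = α / r₁ + α / r₂ := by rw [hA]; ring
  have hid2 : α ^ 3 * K = (α / r₁) ^ 3 / 6 + (α / r₂) ^ 3 / 6 := by rw [hK]; ring
  have hSu : S ≤ α * A := by rw [hS, hid1]; linarith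
  have hSl : α * A - α ^ 3 * K ≤ S := by rw [hS, hid1, hid2]; linarith
  have hSpos : 0 < S := by
    rw [hS]
    exact add_pos (Real.arsinh_pos_iff.2 (by positivity))
      (Real.arsinh_pos_iff.2 (by positivity))
  -- α² K ≤ A/2
  have hα2small : α ^ 2 * K ≤ A / 2 := by
    have h1 : α ^ 2 ≤ M * (A / (2 * K * (M + 1))) := by
      calc α ^ 2 ≤ M * ε := hα2le
        _ ≤ M * (A / (2 * K * (M + 1))) := by
            exact mul_le_mul_of_nonneg_left hεδ2 hM0.le
    have h2 : M * (A / (2 * K * (M + 1))) * K ≤ A / 2 := by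
      have heq : M * (A / (2 * K * (M + 1))) * K = M / (M + 1) * (A / 2) := by
        field_simp
      rw [heq]
      calc M / (M + 1) * (A / 2) ≤ 1 * (A / 2) := by
            apply mul_le_mul_of_nonneg_right _ (by positivity)
            rw [div_le_one (by positivity)]
            linarith
        _ = A / 2 := by ring
    calc α ^ 2 * K ≤ M * (A / (2 * K * (M + 1))) * K :=
          mul_le_mul_of_nonneg_right h1 hK0.le
      _ ≤ A / 2 := h2
  have hcube : α ^ 3 * K ≤ α * A / 2 := by
    have : α ^ 3 * K = α * (α ^ 2 * K) := by ring
    rw [this]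
    calc α * (α ^ 2 * K) ≤ α * (A / 2) := mul_le_mul_of_nonneg_left hα2small hα0.le
      _ = α * A / 2 := by ring
  have hSl2 : α * A / 2 ≤ S := by linarith
  have hid : r₁ * r₂ / (r₁ + r₂) = 1 / A := by
    rw [hA]; field_simp; ring
  have hlow : 1 / A ≤ α / S := by
    have heq : 1 / A = α / (α * A) := by
      rw [eq_div_iff (by positivity)]
      field_simp
    rw [heq]
    gcongr
  have hupp : α / S - 1 / A ≤ 2 * K / A ^ 2 * α ^ 2 := by
    have heq : α / S - 1 / A = (α * A - S) / (S * A) := by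
      field_simp
    have hstep : (α * A - S) / (S * A) ≤ (α ^ 3 * K) / ((α * A / 2) * A) := by
      apply div_le_div₀ (by positivity) (by linarith) (by positivity)
      exact mul_le_mul_of_nonneg_right hSl2 hA0.le
    have heq2 : (α ^ 3 * K) / ((α * A / 2) * A) = 2 * K / A ^ 2 * α ^ 2 := by
      field_simp
    rw [heq]
    calc (α * A - S) / (S * A) ≤ (α ^ 3 * K) / ((α * A / 2) * A) := hstep
      _ = 2 * K / A ^ 2 * α ^ 2 := heq2
  rw [hid, abs_of_pos hε0, abs_of_nonneg (by linarith)]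
  calc α / S - 1 / A ≤ 2 * K / A ^ 2 * α ^ 2 := hupp
    _ ≤ 2 * K / A ^ 2 * (M * ε) := by
        exact mul_le_mul_of_nonneg_left hα2le (by positivity)
    _ = 2 * K / A ^ 2 * M * ε := by ring
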